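/- Let σ = co({x_j}_{j=0}^n) ⊂ ℝ^n be a simplex with affinely independent vertices, g : ℝ^n → ℝ^n twice continuously differentiable on an open set containing σ with |∂²g^{(p)}/∂x^{(q)}∂x^{(r)}(ξ)| ≤ β for all ξ ∈ σ and all p, q, r, V : ℝ^n → ℝ affine with gradient ∇V, and l ∈ ℝ^n with l ≥ |∇V| entrywise. For each vertex j set d_j := g(x_j)ᵀ∇V + c_j β 1_nᵀ l. Suppose a, b₁ > 0 with b₁‖x_j‖^a ≤ V(x_j) for every vertex, that V(x_j) = 0 and d_j = 0 whenever x_j = 0, that d_j < 0 for every vertex with x_j ≠ 0, and that at least one vertex is nonzero. Set b̂₂ := min{ −d_j / V(x_j) : x_j ≠ 0 }. Then b̂₂ > 0 and the Dini derivative of V along g satisfies D⁺V(x) ≤ −b̂₂ · V(x) for every x ∈ σ. -/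

import Mathlib

open Filter Topology Set
open scoped BigOperators

/-- Second partial derivative `∂²φ/∂x^{(q)}∂x^{(r)}` of a scalar function on ℝⁿ. -/
noncomputable def secondPartial {n : ℕ} (φ : EuclideanSpace ℝ (Fin n) → ℝ) (q r : Fin n)
    (ξ : EuclideanSpace ℝ (Fin n)) : ℝ :=
  fderiv ℝ (fun y => fderiv ℝ φ y (EuclideanSpace.single r 1)) ξ (EuclideanSpace.single q 1)

/-- Dini derivative of `V` at `y` along the vector field `g`. -/
noncomputable def diniDeriv {n : ℕ} (V : EuclideanSpace ℝ (Fin n) → ℝ)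
    (g : EuclideanSpace ℝ (Fin n) → EuclideanSpace ℝ (Fin n))
    (y : EuclideanSpace ℝ (Fin n)) : EReal :=
  Filter.limsup (fun h : ℝ => (((V (y + h • g y) - V y) / h : ℝ) : EReal)) (𝓝[>] (0 : ℝ))

lemma euclid_eq_sum_single {n : ℕ} (v : EuclideanSpace ℝ (Fin n)) :
    v = ∑ r, v r • EuclideanSpace.single r (1:ℝ) := by
  ext i
  rw [WithLp.ofLp_sum, Finset.sum_apply]
  simp [EuclideanSpace.single_apply]

lemma clm_apply_eq_sum {n : ℕ} (L : EuclideanSpace ℝ (Fin n) →L[ℝ] ℝ)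
    (v : EuclideanSpace ℝ (Fin n)) :
    L v = ∑ r, v r * L (EuclideanSpace.single r (1:ℝ)) := by
  conv_lhs => rw [euclid_eq_sum_single v]
  rw [map_sum]
  simp

lemma abs_sum_le_card_sq {n : ℕ} (v : EuclideanSpace ℝ (Fin n)) :
    (∑ q, |v q|) ^ 2 ≤ (n : ℝ) * ‖v‖ ^ 2 := by
  have h := sq_sum_le_card_mul_sum_sq (s := (Finset.univ : Finset (Fin n))) (f := fun q => |v q|)
  have hn : ‖v‖ ^ 2 = ∑ q, |v q| ^ 2 := by
    rw [EuclideanSpace.norm_eq, Real.sq_sqrt (by positivity)]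
    simp [Real.norm_eq_abs, sq_abs]
  rw [hn]
  simpa using h

/-- Second-order Taylor-type bound (with a crude factor, no 1/2). -/
lemma taylor_crude_bound {n : ℕ} (φ : EuclideanSpace ℝ (Fin n) → ℝ)
    {U : Set (EuclideanSpace ℝ (Fin n))} (hU : IsOpen U) (hφ : ContDiffOn ℝ 2 φ U)
    {σ : Set (EuclideanSpace ℝ (Fin n))} (hσU : σ ⊆ U) {β : ℝ} (hβ0 : 0 ≤ β)
    (hβ : ∀ ξ ∈ σ, ∀ q r, |secondPartial φ q r ξ| ≤ β)
    (y z : EuclideanSpace ℝ (Fin n))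
    (hseg : ∀ t ∈ Icc (0:ℝ) 1, y + t • (z - y) ∈ σ) :
    |φ z - φ y - fderiv ℝ φ y (z - y)| ≤ β * n * ‖z - y‖ ^ 2 := by
  set v := z - y with hv
  set γ : ℝ → EuclideanSpace ℝ (Fin n) := fun t => y + t • v with hγdef
  have hγU : ∀ t ∈ Icc (0:ℝ) 1, γ t ∈ U := fun t ht => hσU (hseg t ht)
  have hγσ : ∀ t ∈ Icc (0:ℝ) 1, γ t ∈ σ := hseg
  have hdφ : ∀ w ∈ U, DifferentiableAt ℝ φ w := fun w hw =>
    ((hφ.contDiffAt (hU.mem_nhds hw)).differentiableAt (by norm_num))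
  have hC1 : ContDiffOn ℝ 1 (fun w => fderiv ℝ φ w) U :=
    hφ.fderiv_of_isOpen hU (by norm_num)
  have hdF : ∀ (u : EuclideanSpace ℝ (Fin n)), ∀ w ∈ U,
      DifferentiableAt ℝ (fun w' => fderiv ℝ φ w' u) w := by
    intro u w hw
    exact (((hC1.contDiffAt (hU.mem_nhds hw)).differentiableAt one_ne_zero)).clm_apply
      (differentiableAt_const u)
  have hγd : ∀ t : ℝ, HasDerivAt γ v t := by
    intro t
    simpa [hγdef] using ((hasDerivAt_id t).smul_const v).const_add y
  set ψ : ℝ → ℝ := fun t => φ (γ t) with hψdef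
  set ψ' : ℝ → ℝ := fun t => fderiv ℝ φ (γ t) v with hψ'def
  set ψ'' : ℝ → ℝ := fun t => fderiv ℝ (fun w => fderiv ℝ φ w v) (γ t) v with hψ''def
  have hψd : ∀ t ∈ Icc (0:ℝ) 1, HasDerivAt ψ (ψ' t) t := by
    intro t ht
    exact ((hdφ _ (hγU t ht)).hasFDerivAt).comp_hasDerivAt t (hγd t)
  have hψ'd : ∀ t ∈ Icc (0:ℝ) 1, HasDerivAt ψ' (ψ'' t) t := by
    intro t ht
    exact ((hdF v _ (hγU t ht)).hasFDerivAt).comp_hasDerivAt t (hγd t)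
  have hbound : ∀ t ∈ Icc (0:ℝ) 1, |ψ'' t| ≤ β * n * ‖v‖ ^ 2 := by
    intro t ht
    have hξU : γ t ∈ U := hγU t ht
    have hξσ : γ t ∈ σ := hγσ t ht
    have hFeq : (fun w => fderiv ℝ φ w v) =
        fun w => ∑ r, v r * fderiv ℝ φ w (EuclideanSpace.single r (1:ℝ)) := by
      funext w
      exact clm_apply_eq_sum _ v
    have hfd : HasFDerivAt (fun w => fderiv ℝ φ w v)
        (∑ r, v r • fderiv ℝ (fun w => fderiv ℝ φ w (EuclideanSpace.single r (1:ℝ))) (γ t))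
        (γ t) := by
      rw [hFeq]
      refine HasFDerivAt.fun_sum (fun r _ => ?_)
      have := ((hdF (EuclideanSpace.single r (1:ℝ)) _ hξU).hasFDerivAt).const_mul (v r)
      simpa using this
    have heval : ψ'' t = ∑ r, v r * ∑ q, v q * secondPartial φ q r (γ t) := by
      have h1 : ψ'' t = (∑ r, v r •
          fderiv ℝ (fun w => fderiv ℝ φ w (EuclideanSpace.single r (1:ℝ))) (γ t)) v := by
        rw [hψ''def]; simp only; rw [hfd.fderiv]
      rw [h1, ContinuousLinearMap.sum_apply]
      refine Finset.sum_congr rfl fun r _ => ?_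
      rw [ContinuousLinearMap.smul_apply, smul_eq_mul]
      congr 1
      rw [clm_apply_eq_sum]
      rfl
    rw [heval]
    calc |∑ r, v r * ∑ q, v q * secondPartial φ q r (γ t)|
        ≤ ∑ r, |v r| * ∑ q, |v q| * β := by
          refine (Finset.abs_sum_le_sum_abs _ _).trans (Finset.sum_le_sum fun r _ => ?_)
          rw [abs_mul]
          refine mul_le_mul_of_nonneg_left ?_ (abs_nonneg _)
          refine (Finset.abs_sum_le_sum_abs _ _).trans (Finset.sum_le_sum fun q _ => ?_)
          rw [abs_mul]
          exact mul_le_mul_of_nonneg_left (hβ _ hξσ q r) (abs_nonneg _)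
      _ = (∑ r, |v r|) ^ 2 * β := by rw [← Finset.sum_mul, ← Finset.sum_mul]; ring
      _ ≤ ((n : ℝ) * ‖v‖ ^ 2) * β := mul_le_mul_of_nonneg_right (abs_sum_le_card_sq v) hβ0
      _ = β * n * ‖v‖ ^ 2 := by ring
  set M := β * (n : ℝ) * ‖v‖ ^ 2 with hM
  have hM0 : 0 ≤ M := by positivity
  have step1 : ∀ t ∈ Icc (0:ℝ) 1, |ψ' t - ψ' 0| ≤ M * t := by
    have := norm_image_sub_le_of_norm_deriv_le_segment'
      (f := ψ') (f' := ψ'') (a := 0) (b := 1) (C := M)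
      (fun t ht => (hψ'd t ht).hasDerivWithinAt)
      (fun t ht => by
        simpa [Real.norm_eq_abs] using hbound t (Ico_subset_Icc_self ht))
    intro t ht
    simpa [Real.norm_eq_abs] using this t ht
  set η : ℝ → ℝ := fun t => ψ t - t * ψ' 0 with hη
  have step2 : |η 1 - η 0| ≤ M * (1 - 0) := by
    have := norm_image_sub_le_of_norm_deriv_le_segment'
      (f := η) (f' := fun t => ψ' t - ψ' 0) (a := 0) (b := 1) (C := M)
      (fun t ht => ((hψd t ht).sub (hasDerivAt_mul_const (ψ' 0))).hasDerivWithinAt)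
      (fun t ht => by
        have h1 := step1 t (Ico_subset_Icc_self ht)
        have h2 : M * t ≤ M := by nlinarith [ht.1, ht.2]
        simpa [Real.norm_eq_abs] using h1.trans h2)
    simpa [Real.norm_eq_abs] using this 1 (by norm_num)
  have hψ1 : ψ 1 = φ z := by simp [hψdef, hγdef, hv]
  have hψ0 : ψ 0 = φ y := by simp [hψdef, hγdef]
  have hψ'0 : ψ' 0 = fderiv ℝ φ y v := by simp [hψ'def, hγdef]
  have heq : η 1 - η 0 = φ z - φ y - fderiv ℝ φ y v := by
    simp [hη, hψ1, hψ0, hψ'0]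
    ring
  rw [heq] at step2
  calc |φ z - φ y - (fderiv ℝ φ y) (z - y)| = |φ z - φ y - fderiv ℝ φ y v| := by rw [hv]
    _ ≤ M * (1 - 0) := step2
    _ = β * n * ‖z - y‖ ^ 2 := by rw [hM, hv]; ring

lemma exists_convex_weights {m : ℕ} {E : Type*} [AddCommGroup E] [Module ℝ E]
    (x : Fin m → E) {y : E} (hy : y ∈ convexHull ℝ (Set.range x)) :
    ∃ α : Fin m → ℝ, (∀ j, 0 ≤ α j) ∧ ∑ j, α j = 1 ∧ ∑ j, α j • x j = y := by
  rw [convexHull_range_eq_exists_affineCombination] at hy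
  obtain ⟨s, w, h0, h1, h2⟩ := hy
  refine ⟨fun j => if j ∈ s then w j else 0,
    fun j => by by_cases h : j ∈ s <;> simp [h, h0 j], ?_, ?_⟩
  · rw [Finset.sum_ite_mem, Finset.univ_inter, h1]
  · have : ∀ j : Fin m, (if j ∈ s then w j else 0) • x j
        = if j ∈ s then w j • x j else 0 := by
      intro j; by_cases h : j ∈ s <;> simp [h]
    rw [Finset.sum_congr rfl fun j _ => this j, Finset.sum_ite_mem, Finset.univ_inter]
    rw [← Finset.affineCombination_eq_linear_combination s x w h1]
    exact h2

lemma dini_affine {n : ℕ} (V : EuclideanSpace ℝ (Fin n) → ℝ) (gradV : Fin n → ℝ) (ω : ℝ)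
    (hV : ∀ y, V y = (∑ i, gradV i * y i) + ω)
    (g : EuclideanSpace ℝ (Fin n) → EuclideanSpace ℝ (Fin n))
    (y : EuclideanSpace ℝ (Fin n)) :
    diniDeriv V g y = ((∑ i, gradV i * g y i : ℝ) : EReal) := by
  have hev : ∀ᶠ (h : ℝ) in 𝓝[>] (0:ℝ),
      (((V (y + h • g y) - V y) / h : ℝ) : EReal) = ((∑ i, gradV i * g y i : ℝ) : EReal) := by
    filter_upwards [self_mem_nhdsWithin] with h hh
    have hh' : (h:ℝ) ≠ 0 := ne_of_gt hh
    norm_cast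
    have hdiff : V (y + h • g y) - V y = h * ∑ i, gradV i * g y i := by
      rw [hV, hV]
      have happ : ∀ i, (y + h • g y) i = y i + h * g y i := by
        intro i; rfl
      rw [Finset.sum_congr rfl fun i _ => by rw [happ i, mul_add]]
      rw [Finset.sum_add_distrib, Finset.mul_sum]
      rw [Finset.sum_congr rfl
        (fun i _ => show gradV i * (h * g y i) = h * (gradV i * g y i) by ring)]
      ring
    rw [hdiff, mul_comm, mul_div_assoc, div_self hh', mul_one]
  rw [diniDeriv, Filter.limsup_congr hev]
  exact Filter.limsup_const _

/-- strict per-vertex decrease gives `b̂₂ > 0` and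
`D⁺V(x) ≤ −b̂₂ V(x)` on the simplex, with `b̂₂ = min { −d_j / V(x_j) : x_j ≠ 0 }`. -/
theorem stmt4 (n : ℕ)
    (x : Fin (n + 1) → EuclideanSpace ℝ (Fin n))
    (hx : LinearIndependent ℝ (fun j : Fin n => x j.succ - x 0))
    (g : EuclideanSpace ℝ (Fin n) → EuclideanSpace ℝ (Fin n))
    (U : Set (EuclideanSpace ℝ (Fin n))) (hU : IsOpen U)
    (hσU : convexHull ℝ (Set.range x) ⊆ U)
    (hg : ContDiffOn ℝ 2 g U)
    (β : ℝ)
    (hβ : ∀ ξ ∈ convexHull ℝ (Set.range x), ∀ p q r : Fin n,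
      |secondPartial (fun y => g y p) q r ξ| ≤ β)
    (V : EuclideanSpace ℝ (Fin n) → ℝ) (gradV : Fin n → ℝ) (ω : ℝ)
    (hV : ∀ y, V y = (∑ i, gradV i * y i) + ω)
    (l : Fin n → ℝ) (hl : ∀ i, |gradV i| ≤ l i)
    (c : Fin (n + 1) → ℝ)
    (hc : ∀ j, c j = ((n : ℝ) / 2) * ‖x j - x 0‖ *
      ((⨆ k : Fin n, ‖x k.succ - x 0‖) + ‖x j - x 0‖))
    (d : Fin (n + 1) → ℝ)
    (hd : ∀ j, d j = (∑ i, g (x j) i * gradV i) + c j * β * (∑ i, l i))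
    (a b₁ : ℝ) (ha : 0 < a) (hb₁ : 0 < b₁)
    (hlow : ∀ j, b₁ * ‖x j‖ ^ a ≤ V (x j))
    (hzero : ∀ j, x j = 0 → V (x j) = 0 ∧ d j = 0)
    (hneg : ∀ j, x j ≠ 0 → d j < 0)
    (hex : ∃ j, x j ≠ 0)
    (bhat : ℝ)
    (hbh : bhat = sInf {t : ℝ | ∃ j, x j ≠ 0 ∧ t = -d j / V (x j)}) :
    0 < bhat ∧
      ∀ y ∈ convexHull ℝ (Set.range x), diniDeriv V g y ≤ ((-bhat * V y : ℝ) : EReal) := by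
  obtain ⟨j0, hj0⟩ := hex
  set σ : Set (EuclideanSpace ℝ (Fin n)) := convexHull ℝ (Set.range x) with hσdef
  have hxσ : ∀ j, x j ∈ σ := fun j => subset_convexHull ℝ _ ⟨j, rfl⟩
  -- n ≠ 0
  rcases Nat.eq_zero_or_pos n with hn0 | hn1
  · exfalso
    apply hj0
    subst hn0
    ext i
    exact Fin.elim0 i
  -- positivity of V at nonzero vertices
  have hVpos : ∀ j, x j ≠ 0 → 0 < V (x j) := by
    intro j hj
    refine lt_of_lt_of_le ?_ (hlow j)
    have : (0:ℝ) < ‖x j‖ := norm_pos_iff.mpr hj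
    positivity
  -- the set S
  set S : Set ℝ := {t : ℝ | ∃ j, x j ≠ 0 ∧ t = -d j / V (x j)} with hS
  have hSsub : S ⊆ Set.range (fun j => -d j / V (x j)) := by
    rintro t ⟨j, _, rfl⟩; exact ⟨j, rfl⟩
  have hSfin : S.Finite := (Set.finite_range _).subset hSsub
  have hSne : S.Nonempty := ⟨-d j0 / V (x j0), j0, hj0, rfl⟩
  have hSpos : ∀ t ∈ S, 0 < t := by
    rintro t ⟨j, hj, rfl⟩
    exact div_pos (by linarith [hneg j hj]) (hVpos j hj)
  have hbhat_mem : bhat ∈ S := by rw [hbh]; exact hSne.csInf_mem hSfin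
  have hbhat_pos : 0 < bhat := hSpos _ hbhat_mem
  have hbhat_le : ∀ t ∈ S, bhat ≤ t := by
    intro t ht; rw [hbh]; exact csInf_le hSfin.bddBelow ht
  refine ⟨hbhat_pos, ?_⟩
  -- d j ≤ -bhat * V (x j) for all j
  have hdle : ∀ j, d j ≤ -bhat * V (x j) := by
    intro j
    by_cases hj : x j = 0
    · obtain ⟨h1, h2⟩ := hzero j hj
      rw [h1, h2]; ring_nf; rfl
    · have hVj := hVpos j hj
      have := hbhat_le _ ⟨j, hj, rfl⟩
      rw [le_div_iff₀ hVj] at this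
      linarith
  -- β ≥ 0
  have hβ0 : 0 ≤ β := le_trans (abs_nonneg _)
    (hβ (x j0) (hxσ j0) ⟨0, hn1⟩ ⟨0, hn1⟩ ⟨0, hn1⟩)
  have hl0 : ∀ i, 0 ≤ l i := fun i => le_trans (abs_nonneg _) (hl i)
  -- max over the vertices
  set mx : ℝ := ⨆ k : Fin n, ‖x k.succ - x 0‖ with hmx
  have hFinn : Nonempty (Fin n) := ⟨⟨0, hn1⟩⟩
  have hmx_ge : ∀ j, ‖x j - x 0‖ ≤ mx := by
    intro j
    induction j using Fin.cases with
    | zero =>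
      simp only [sub_self, norm_zero]
      refine le_trans (norm_nonneg (x (⟨0, hn1⟩ : Fin n).succ - x 0)) ?_
      exact le_ciSup (f := fun k : Fin n => ‖x k.succ - x 0‖)
        (Set.Finite.bddAbove (Set.finite_range _)) ⟨0, hn1⟩
    | succ k =>
      exact le_ciSup (f := fun k : Fin n => ‖x k.succ - x 0‖)
        (Set.Finite.bddAbove (Set.finite_range _)) k
  -- main second part
  intro y hy
  rw [dini_affine V gradV ω hV g y, EReal.coe_le_coe_iff]
  obtain ⟨α, hα0, hα1, hαy⟩ := exists_convex_weights x hy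
  -- segment membership
  have hseg : ∀ j, ∀ t ∈ Icc (0:ℝ) 1, y + t • (x j - y) ∈ σ := by
    intro j t ht
    have hmem := (convex_convexHull ℝ (Set.range x)) hy (hxσ j)
      (by linarith [ht.2] : (0:ℝ) ≤ 1 - t) ht.1 (by ring)
    have heq : (1 - t) • y + t • x j = y + t • (x j - y) := by
      rw [sub_smul, one_smul, smul_sub]; abel
    rw [heq] at hmem
    exact hmem
  -- component functions are C²
  have hφp : ∀ p : Fin n, ContDiffOn ℝ 2 (fun w => g w p) U := fun p =>
    (ContinuousLinearMap.contDiff (EuclideanSpace.proj p (𝕜 := ℝ))).comp_contDiffOn hg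
  -- Taylor remainders
  set L : Fin n → (EuclideanSpace ℝ (Fin n) →L[ℝ] ℝ) :=
    fun p => fderiv ℝ (fun w => g w p) y with hLdef
  set R : Fin (n + 1) → Fin n → ℝ :=
    fun j p => g (x j) p - g y p - L p (x j - y) with hRdef
  have hRb : ∀ j p, |R j p| ≤ β * n * ‖x j - y‖ ^ 2 := by
    intro j p
    exact taylor_crude_bound (fun w => g w p) hU (hφp p) hσU hβ0
      (fun ξ hξ q r => hβ ξ hξ p q r) y (x j) (hseg j)
  -- the weighted sum of directions vanishes
  have hsum0 : ∑ j, α j • (x j - y) = (0 : EuclideanSpace ℝ (Fin n)) := by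
    have : ∀ j : Fin (n+1), α j • (x j - y) = α j • x j - α j • y := fun j => smul_sub _ _ _
    rw [Finset.sum_congr rfl fun j _ => this j, Finset.sum_sub_distrib, hαy,
      ← Finset.sum_smul, hα1, one_smul, sub_self]
  have hL0 : ∀ p, ∑ j, α j * L p (x j - y) = 0 := by
    intro p
    have he : ∀ j : Fin (n+1), α j * L p (x j - y) = L p (α j • (x j - y)) := by
      intro j; rw [map_smul]; rfl
    rw [Finset.sum_congr rfl fun j _ => he j, ← map_sum, hsum0, map_zero]
  have hgyp : ∀ p, g y p = (∑ j, α j * g (x j) p) - ∑ j, α j * R j p := by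
    intro p
    have h1 : ∑ j, α j * R j p = (∑ j, α j * g (x j) p) - g y p := by
      have e : ∀ j : Fin (n+1), α j * R j p
          = α j * g (x j) p - α j * g y p - α j * (L p (x j - y)) := by
        intro j; simp only [hRdef]; ring
      rw [Finset.sum_congr rfl fun j _ => e j, Finset.sum_sub_distrib, Finset.sum_sub_distrib,
        ← Finset.sum_mul, hα1, one_mul, hL0 p, sub_zero]
    linarith [h1]
  -- abbreviations
  set T : ℝ := ∑ j, α j * ‖x j - y‖ ^ 2 with hT
  set A : ℝ := ∑ j, α j * (∑ p, gradV p * g (x j) p) with hA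
  set B : ℝ := ∑ j, α j * (β * n * ‖x j - y‖ ^ 2) with hB
  set K2 : ℝ := ∑ p, l p with hK2
  have hK20 : 0 ≤ K2 := Finset.sum_nonneg fun p _ => hl0 p
  -- geometric inequality : n * T ≤ ∑ j, α j * c j
  have hgeom : (n : ℝ) * T ≤ ∑ j, α j * c j := by
    set w : EuclideanSpace ℝ (Fin n) := y - x 0 with hw
    have hzbar : ∑ j, α j • (x j - x 0) = w := by
      have : ∀ j : Fin (n+1), α j • (x j - x 0) = α j • x j - α j • x 0 :=
        fun j => smul_sub _ _ _
      rw [Finset.sum_congr rfl fun j _ => this j, Finset.sum_sub_distrib, hαy,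
        ← Finset.sum_smul, hα1, one_smul]
    have hxyw : ∀ j, x j - y = (x j - x 0) - w := by intro j; rw [hw]; abel
    have hinnersum : ∑ j, α j * (inner ℝ (x j - x 0) w : ℝ) = ‖w‖ ^ 2 := by
      have he : ∀ j : Fin (n+1), α j * (inner ℝ (x j - x 0) w : ℝ)
          = (inner ℝ (α j • (x j - x 0)) w : ℝ) := by
        intro j; rw [real_inner_smul_left]
      rw [Finset.sum_congr rfl fun j _ => he j, ← sum_inner, hzbar,
        real_inner_self_eq_norm_sq]
    have hTeq : T = (∑ j, α j * ‖x j - x 0‖ ^ 2) - ‖w‖ ^ 2 := by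
      have he : ∀ j : Fin (n+1), α j * ‖x j - y‖ ^ 2
          = α j * ‖x j - x 0‖ ^ 2 - 2 * (α j * (inner ℝ (x j - x 0) w : ℝ)) + α j * ‖w‖ ^ 2 := by
        intro j
        rw [hxyw j, norm_sub_sq_real]
        ring
      rw [hT, Finset.sum_congr rfl fun j _ => he j, Finset.sum_add_distrib,
        Finset.sum_sub_distrib, ← Finset.mul_sum, hinnersum, ← Finset.sum_mul, hα1, one_mul]
      ring
    have hS1le : (∑ j, α j * ‖x j - x 0‖ ^ 2) ≤ ∑ j, α j * (‖x j - x 0‖ * mx) := by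
      refine Finset.sum_le_sum fun j _ => ?_
      refine mul_le_mul_of_nonneg_left ?_ (hα0 j)
      rw [sq]
      exact mul_le_mul_of_nonneg_left (hmx_ge j) (norm_nonneg _)
    have hc_sum : ∑ j, α j * c j
        = ((n:ℝ)/2) * (∑ j, α j * (‖x j - x 0‖ * mx)) + ((n:ℝ)/2) * (∑ j, α j * ‖x j - x 0‖ ^ 2) := by
      rw [Finset.mul_sum, Finset.mul_sum, ← Finset.sum_add_distrib]
      refine Finset.sum_congr rfl fun j _ => ?_
      rw [hc j]
      ring
    have hw2 : 0 ≤ ‖w‖ ^ 2 := sq_nonneg _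
    have hn' : (0:ℝ) ≤ (n:ℝ) := Nat.cast_nonneg n
    have h5 : ((n:ℝ)/2) * (∑ j, α j * ‖x j - x 0‖ ^ 2)
        ≤ ((n:ℝ)/2) * (∑ j, α j * (‖x j - x 0‖ * mx)) :=
      mul_le_mul_of_nonneg_left hS1le (by positivity)
    have h6 : (n:ℝ) * T = (n:ℝ) * (∑ j, α j * ‖x j - x 0‖ ^ 2) - (n:ℝ) * ‖w‖ ^ 2 := by
      rw [hTeq]; ring
    have h7 : 0 ≤ (n:ℝ) * ‖w‖ ^ 2 := mul_nonneg hn' hw2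
    linarith [h5, h6, h7, hc_sum]
  -- V is affine on the combination
  have hyi : ∀ i, y i = ∑ j, α j * x j i := by
    intro i
    rw [← hαy, WithLp.ofLp_sum, Finset.sum_apply]
    rfl
  have hVy : V y = ∑ j, α j * V (x j) := by
    calc V y = (∑ i, ∑ j, gradV i * (α j * x j i)) + ω := by
          rw [hV]
          congr 1
          exact Finset.sum_congr rfl fun i _ => by rw [hyi i, Finset.mul_sum]
      _ = (∑ j, ∑ i, gradV i * (α j * x j i)) + ω := by rw [Finset.sum_comm]
      _ = ∑ j, α j * V (x j) := by
          have he : ∀ j : Fin (n+1), α j * V (x j)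
              = (∑ i, gradV i * (α j * x j i)) + α j * ω := by
            intro j
            rw [hV, mul_add, Finset.mul_sum]
            congr 1
            exact Finset.sum_congr rfl fun i _ => by ring
          rw [Finset.sum_congr rfl fun j _ => he j, Finset.sum_add_distrib,
            ← Finset.sum_mul, hα1, one_mul]
  -- the main chain
  have hswap : ∑ p, gradV p * (∑ j, α j * g (x j) p) = A := by
    calc ∑ p, gradV p * (∑ j, α j * g (x j) p)
        = ∑ p, ∑ j, gradV p * (α j * g (x j) p) :=
          Finset.sum_congr rfl fun p _ => Finset.mul_sum _ _ _
      _ = ∑ j, ∑ p, gradV p * (α j * g (x j) p) := Finset.sum_comm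
      _ = A := Finset.sum_congr rfl fun j _ => by
          rw [Finset.mul_sum]
          exact Finset.sum_congr rfl fun p _ => by ring
  have hdecomp : ∑ p, gradV p * g y p
      = A - ∑ p, gradV p * (∑ j, α j * R j p) := by
    rw [← hswap, ← Finset.sum_sub_distrib]
    refine Finset.sum_congr rfl fun p _ => ?_
    rw [hgyp p]
    ring
  have hinner2 : ∀ p, |∑ j, α j * R j p| ≤ B := by
    intro p
    refine (Finset.abs_sum_le_sum_abs _ _).trans ?_
    refine Finset.sum_le_sum fun j _ => ?_
    rw [abs_mul, abs_of_nonneg (hα0 j)]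
    exact mul_le_mul_of_nonneg_left (hRb j p) (hα0 j)
  have herr : |∑ p, gradV p * (∑ j, α j * R j p)| ≤ K2 * B := by
    refine (Finset.abs_sum_le_sum_abs _ _).trans ?_
    rw [hK2, Finset.sum_mul]
    refine Finset.sum_le_sum fun p _ => ?_
    rw [abs_mul]
    refine mul_le_mul (hl p) (hinner2 p) (abs_nonneg _) (hl0 p)
  have hBeq : B = β * ((n:ℝ) * T) := by
    calc B = ∑ j, β * ((n:ℝ) * (α j * ‖x j - y‖ ^ 2)) :=
          Finset.sum_congr rfl fun j _ => by ring
      _ = β * ((n:ℝ) * T) := by rw [← Finset.mul_sum, ← Finset.mul_sum]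
  have hBle : B ≤ β * ∑ j, α j * c j := by
    rw [hBeq]
    exact mul_le_mul_of_nonneg_left hgeom hβ0
  have hd_sum : ∑ j, α j * d j = A + K2 * (β * ∑ j, α j * c j) := by
    have h2 : K2 * (β * ∑ j, α j * c j) = ∑ j, K2 * (β * (α j * c j)) := by
      rw [Finset.mul_sum, Finset.mul_sum]
    rw [hA, h2, ← Finset.sum_add_distrib]
    refine Finset.sum_congr rfl fun j _ => ?_
    rw [hd j, mul_add]
    congr 1
    · congr 1
      exact Finset.sum_congr rfl fun i _ => mul_comm _ _
    · rw [hK2]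
      ring
  have hfinal : ∑ j, α j * d j ≤ -bhat * V y := by
    calc ∑ j, α j * d j ≤ ∑ j, α j * (-bhat * V (x j)) :=
          Finset.sum_le_sum fun j _ => mul_le_mul_of_nonneg_left (hdle j) (hα0 j)
      _ = -bhat * V y := by
          rw [hVy, Finset.mul_sum]
          exact Finset.sum_congr rfl fun j _ => by ring
  calc ∑ i, gradV i * g y i
      = A - ∑ p, gradV p * (∑ j, α j * R j p) := hdecomp
    _ ≤ A + K2 * B := by
        have := neg_abs_le (∑ p, gradV p * (∑ j, α j * R j p))
        linarith [herr]
    _ ≤ A + K2 * (β * ∑ j, α j * c j) := by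
        have := mul_le_mul_of_nonneg_left hBle hK20
        linarith
    _ = ∑ j, α j * d j := (hd_sum).symm
    _ ≤ -bhat * V y := hfinal
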